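/- For every interval I ⊆ ℝ and all integers n, n' ≥ 0, the number of zeros of p_n lying in I and the number of zeros of p_{n'} lying in I differ by at most |n − n'|. (This is the variational/interlacing principle, eq. (2.22) of the paper.) -/

import Mathlib

open Polynomial

/-- Counting lemma: if between any two elements of `S` there is an element of `T`,
then `S` has at most one more element than `T`. -/
lemma interlace_count_aux (N : ℕ) : ∀ (S T : Set ℝ), S.Finite → T.Finite → S.ncard ≤ N →
    (∀ x ∈ S, ∀ y ∈ S, x < y → ∃ z ∈ T, x < z ∧ z < y) → S.ncard ≤ T.ncard + 1 := by
  induction N with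
  | zero => intro S T _ _ hle _; omega
  | succ N ih =>
    intro S T hS hT hle h
    by_cases h1 : S.ncard ≤ 1
    · omega
    · push_neg at h1
      have hSne : S.Nonempty := Set.nonempty_of_ncard_ne_zero (by omega)
      obtain ⟨m, hmS, hmax⟩ := Set.exists_max_image S id hS hSne
      set S' := S \ {m} with hS'def
      have hS'fin : S'.Finite := hS.diff
      have hScard : S'.ncard + 1 = S.ncard := Set.ncard_diff_singleton_add_one hmS hS
      have hS'ne : S'.Nonempty := Set.nonempty_of_ncard_ne_zero (by omega)
      obtain ⟨m', hm'S', hmax'⟩ := Set.exists_max_image S' id hS'fin hS'ne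
      have hm'S : m' ∈ S := hm'S'.1
      have hm'lt : m' < m := lt_of_le_of_ne (hmax m' hm'S) (by simpa using hm'S'.2)
      obtain ⟨z, hzT, hz1, hz2⟩ := h m' hm'S m hmS hm'lt
      have key : ∀ x ∈ S', ∀ y ∈ S', x < y → ∃ w ∈ T \ {z}, x < w ∧ w < y := by
        intro x hx y hy hxy
        obtain ⟨w, hwT, hw1, hw2⟩ := h x hx.1 y hy.1 hxy
        refine ⟨w, ⟨hwT, ?_⟩, hw1, hw2⟩
        have : y ≤ m' := hmax' y hy
        have : w < z := lt_of_lt_of_le (lt_of_lt_of_le hw2 this) (le_of_lt hz1)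
        simp [ne_of_lt this]
      have := ih S' (T \ {z}) hS'fin hT.diff (by omega) key
      have hTcard : (T \ {z}).ncard + 1 = T.ncard := Set.ncard_diff_singleton_add_one hzT hT
      omega

/-- Between two zeros of `f` there is a zero of `g` when the Wronskian never vanishes. -/
lemma zero_between {f g : Polynomial ℝ}
    (hW : ∀ x, (derivative f).eval x * g.eval x - f.eval x * (derivative g).eval x ≠ 0)
    {x y : ℝ} (hx : f.eval x = 0) (hy : f.eval y = 0) (hxy : x < y) :
    ∃ z, x < z ∧ z < y ∧ g.eval z = 0 := by
  by_contra hcon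
  push_neg at hcon
  have hgx : g.eval x ≠ 0 := by
    intro h0; exact hW x (by rw [hx, h0]; ring)
  have hgy : g.eval y ≠ 0 := by
    intro h0; exact hW y (by rw [hy, h0]; ring)
  have hgI : ∀ t ∈ Set.Icc x y, g.eval t ≠ 0 := by
    intro t ht
    rcases eq_or_lt_of_le ht.1 with h | h
    · rwa [← h]
    rcases eq_or_lt_of_le ht.2 with h' | h'
    · rwa [h']
    intro h0
    exact (hcon t h h') h0
  set F : ℝ → ℝ := fun t => f.eval t / g.eval t with hF
  have hcont : ContinuousOn F (Set.Icc x y) := by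
    apply ContinuousOn.div
    · exact (Polynomial.continuous f).continuousOn
    · exact (Polynomial.continuous g).continuousOn
    · exact hgI
  have hFx : F x = F y := by simp [hF, hx, hy]
  obtain ⟨c, hc, hderiv⟩ := exists_deriv_eq_zero hxy hcont hFx
  have hgc : g.eval c ≠ 0 := hgI c (Set.mem_Icc.mpr ⟨le_of_lt hc.1, le_of_lt hc.2⟩)
  have hd : HasDerivAt F
      (((derivative f).eval c * g.eval c - f.eval c * (derivative g).eval c) / g.eval c ^ 2) c :=
    (Polynomial.hasDerivAt f c).div (Polynomial.hasDerivAt g c) hgc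
  rw [hd.deriv] at hderiv
  exact hW c (by
    field_simp at hderiv
    linarith [hderiv])

/-- One-step count comparison from the non-vanishing Wronskian. -/
lemma step_count {f g : Polynomial ℝ}
    (hW : ∀ x, (derivative f).eval x * g.eval x - f.eval x * (derivative g).eval x ≠ 0)
    (hf : f ≠ 0) (hg : g ≠ 0)
    {I : Set ℝ} (hI : I.OrdConnected) :
    {x ∈ I | f.eval x = 0}.ncard ≤ {x ∈ I | g.eval x = 0}.ncard + 1 := by
  have hSfin : {x ∈ I | f.eval x = 0}.Finite :=
    (Polynomial.finite_setOf_isRoot hf).subset (fun x hx => hx.2)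
  have hTfin : {x ∈ I | g.eval x = 0}.Finite :=
    (Polynomial.finite_setOf_isRoot hg).subset (fun x hx => hx.2)
  refine interlace_count_aux {x ∈ I | f.eval x = 0}.ncard _ _ hSfin hTfin le_rfl ?_
  intro x hx y hy hxy
  obtain ⟨z, hz1, hz2, hz3⟩ := zero_between hW hx.2 hy.2 hxy
  exact ⟨z, ⟨hI.out hx.1 hy.1 ⟨le_of_lt hz1, le_of_lt hz2⟩, hz3⟩, hz1, hz2⟩

theorem oprl_zero_count_interval_stability
    (a b : ℕ → ℝ)
    (ha : ∀ n, 1 ≤ n → 0 < a n)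
    (P : ℕ → Polynomial ℝ)
    (hP0 : P 0 = 1)
    (hPrec0 : (X : Polynomial ℝ) * P 0 = a 1 • P 1 + b 1 • P 0)
    (hPrec : ∀ n, 1 ≤ n →
      (X : Polynomial ℝ) * P n = a (n + 1) • P (n + 1) + b (n + 1) • P n + a n • P (n - 1))
    (I : Set ℝ) (hI : I.OrdConnected) (n n' : ℕ) :
    |(({x ∈ I | (P n).eval x = 0}.ncard : ℤ)) - ({x ∈ I | (P n').eval x = 0}.ncard : ℤ)| ≤
      |(n : ℤ) - (n' : ℤ)| := by
  -- the (scaled) Wronskian is everywhere positive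
  have Wpos : ∀ m x, 0 < a (m + 1) *
      ((derivative (P (m + 1))).eval x * (P m).eval x
        - (P (m + 1)).eval x * (derivative (P m)).eval x) := by
    intro m
    induction m with
    | zero =>
      intro x
      have hD := congrArg derivative hPrec0
      simp [hP0] at hD
      have := congrArg (Polynomial.eval x) hD
      simp at this
      have h1 : a 1 * (derivative (P 1)).eval x = 1 := by linarith
      simp [hP0]
      nlinarith
    | succ m ih =>
      intro x
      have hR := hPrec (m + 1) (by omega)
      simp only [Nat.add_sub_cancel] at hR
      have hE1 := congrArg (Polynomial.eval x) hR
      have hD := congrArg derivative hR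
      have hE2 := congrArg (Polynomial.eval x) hD
      simp [derivative_smul, mul_comm] at hE1 hE2
      have hih := ih x
      have heq : a (m + 1 + 1) *
          ((derivative (P (m + 1 + 1))).eval x * (P (m + 1)).eval x
            - (P (m + 1 + 1)).eval x * (derivative (P (m + 1))).eval x)
          = a (m + 1) * ((derivative (P (m + 1))).eval x * (P m).eval x
            - (P (m + 1)).eval x * (derivative (P m)).eval x)
            + ((P (m + 1)).eval x) ^ 2 := by
        linear_combination (derivative (P (m + 1))).eval x * hE1 - (P (m + 1)).eval x * hE2
      have hsq := sq_nonneg ((P (m + 1)).eval x)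
      linarith
  have hWne : ∀ m x, (derivative (P (m + 1))).eval x * (P m).eval x
      - (P (m + 1)).eval x * (derivative (P m)).eval x ≠ 0 := by
    intro m x
    have h1 := Wpos m x
    have h2 := ha (m + 1) (by omega)
    intro h0
    rw [h0] at h1
    simp at h1
  have hPne : ∀ m, P m ≠ 0 := by
    intro m h0
    rcases Nat.eq_zero_or_pos m with h | h
    · subst h; rw [h0] at hP0; exact one_ne_zero hP0.symm
    · obtain ⟨k, rfl⟩ : ∃ k, m = k + 1 := ⟨m - 1, by omega⟩
      have := hWne k 0
      rw [h0] at this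
      simp at this
  -- the one-step inequality, both directions
  have step : ∀ m, |(({x ∈ I | (P (m+1)).eval x = 0}.ncard : ℤ))
      - ({x ∈ I | (P m).eval x = 0}.ncard : ℤ)| ≤ 1 := by
    intro m
    have h1 : {x ∈ I | (P (m+1)).eval x = 0}.ncard ≤ {x ∈ I | (P m).eval x = 0}.ncard + 1 := by
      refine step_count ?_ (hPne (m+1)) (hPne m) hI
      intro x
      exact hWne m x
    have h2 : {x ∈ I | (P m).eval x = 0}.ncard ≤ {x ∈ I | (P (m+1)).eval x = 0}.ncard + 1 := by
      refine step_count ?_ (hPne m) (hPne (m+1)) hI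
      intro x
      have := hWne m x
      intro h0
      apply this
      linarith
    rw [abs_le]
    constructor <;> [skip; skip] <;> push_cast <;> omega
  -- telescoping
  set c : ℕ → ℤ := fun m => ({x ∈ I | (P m).eval x = 0}.ncard : ℤ) with hc
  have key : ∀ d k, |c (k + d) - c k| ≤ d := by
    intro d
    induction d with
    | zero => intro k; simp
    | succ d ih =>
      intro k
      have h1 := ih k
      have h2 := step (k + d)
      have : k + (d + 1) = (k + d) + 1 := by omega
      rw [this]
      calc |c ((k + d) + 1) - c k|
          ≤ |c ((k + d) + 1) - c (k + d)| + |c (k + d) - c k| := abs_sub_le _ _ _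
        _ ≤ 1 + d := add_le_add h2 h1
        _ = (d + 1 : ℕ) := by push_cast; ring
  rcases le_total n n' with h | h
  · obtain ⟨d, rfl⟩ : ∃ d, n' = n + d := ⟨n' - n, by omega⟩
    have := key d n
    rw [abs_sub_comm] at this
    calc |c n - c (n + d)| ≤ d := by rw [abs_sub_comm]; exact key d n
      _ ≤ |(n : ℤ) - (n + d : ℕ)| := by push_cast; rw [abs_sub_comm]; simp [abs_of_nonneg]
  · obtain ⟨d, rfl⟩ : ∃ d, n = n' + d := ⟨n - n', by omega⟩
    calc |c (n' + d) - c n'| ≤ d := key d n'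
      _ ≤ |((n' + d : ℕ) : ℤ) - n'| := by push_cast; simp [abs_of_nonneg]
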